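/- Fix real numbers τ > 0, r > 0, κ₁ > 0 and t₀ ∈ ℝ. Consider the naive offset-only update x_{k+1} = x_k + τ·r·s_k, s_{k+1} = s_k + κ₁·(t_k − x_k), where t_k = t₀ + k·τ. Then the offset D_k = t_k − x_k and the frequency error e_k = 1 − r·s_k evolve as (D_{k+1}, e_{k+1}) = M·(D_k, e_k) with M = [[1, τ],[−r·κ₁, 1]], and the complex eigenvalues of M are 1 + i·√(τ·r·κ₁) and 1 − i·√(τ·r·κ₁), each of modulus √(1 + τ·r·κ₁) > 1. -/

import Mathlib

open Matrix Polynomial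

/-- Instability of the naive offset-only clock-steering rule (Eq. (4) of the paper):
the offset `D_k = t_k − x_k` and frequency error `e_k = 1 − r s_k` evolve by the matrix
`M = [[1, τ],[−rκ₁, 1]]`, whose eigenvalues are `1 ± i√(τrκ₁)`, each of modulus
`√(1 + τrκ₁) > 1`. -/
theorem stmt16 (τ r κ₁ t₀ : ℝ) (hτ : 0 < τ) (hr : 0 < r) (hκ : 0 < κ₁)
    (x s t D e : ℕ → ℝ)
    (ht : ∀ k : ℕ, t k = t₀ + (k : ℝ) * τ)
    (hx : ∀ k : ℕ, x (k + 1) = x k + τ * r * s k)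
    (hs : ∀ k : ℕ, s (k + 1) = s k + κ₁ * (t k - x k))
    (hD : ∀ k : ℕ, D k = t k - x k)
    (he : ∀ k : ℕ, e k = 1 - r * s k)
    (M : Matrix (Fin 2) (Fin 2) ℝ) (hM : M = !![1, τ; -(r * κ₁), 1]) :
    (∀ k : ℕ, ![D (k + 1), e (k + 1)] = M *ᵥ ![D k, e k]) ∧
    (∀ μ : ℂ, (M.map Complex.ofReal).charpoly.IsRoot μ ↔
      (μ = 1 + (Real.sqrt (τ * r * κ₁) : ℂ) * Complex.I ∨
       μ = 1 - (Real.sqrt (τ * r * κ₁) : ℂ) * Complex.I)) ∧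
    ‖(1 + (Real.sqrt (τ * r * κ₁) : ℂ) * Complex.I)‖
      = Real.sqrt (1 + τ * r * κ₁) ∧
    ‖(1 - (Real.sqrt (τ * r * κ₁) : ℂ) * Complex.I)‖
      = Real.sqrt (1 + τ * r * κ₁) ∧
    1 < Real.sqrt (1 + τ * r * κ₁) := by
  have hpos : 0 < τ * r * κ₁ := by positivity
  have hsq : (Real.sqrt (τ * r * κ₁)) ^ 2 = τ * r * κ₁ := Real.sq_sqrt hpos.le
  refine ⟨?_, ?_, ?_, ?_, ?_⟩
  · intro k
    subst hM
    funext i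
    fin_cases i
    · simp [mulVec, dotProduct, Fin.sum_univ_two, hD, ht, hx, he]
      ring
    · simp [mulVec, dotProduct, Fin.sum_univ_two, hD, he, hs]
      ring
  · intro μ
    have ha : ((Real.sqrt (τ * r * κ₁) : ℂ)) ^ 2 = (τ : ℂ) * r * κ₁ := by
      rw [← Complex.ofReal_pow, hsq]; push_cast; ring
    have hI : ((Real.sqrt (τ * r * κ₁) : ℂ) * Complex.I) ^ 2 = -((τ : ℂ) * r * κ₁) := by
      rw [mul_pow, ha, Complex.I_sq]; ring
    have hcp : (M.map Complex.ofReal).charpoly =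
        X ^ 2 - 2 * X + C (1 + (τ : ℂ) * r * κ₁) := by
      subst hM
      rw [Matrix.charpoly, Matrix.det_fin_two]
      simp [Matrix.charmatrix_apply_eq, Matrix.charmatrix_apply_ne, Matrix.map_apply,
        _root_.map_mul, _root_.map_one, _root_.map_neg, Complex.ofReal_mul, Complex.ofReal_one,
        Complex.ofReal_neg]
      ring
    rw [hcp]
    simp only [IsRoot, eval_add, eval_sub, eval_pow, eval_mul, eval_X, eval_C, eval_ofNat]
    constructor
    · intro h
      have h2 : (μ - 1 - (Real.sqrt (τ * r * κ₁) : ℂ) * Complex.I) *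
          (μ - 1 + (Real.sqrt (τ * r * κ₁) : ℂ) * Complex.I) = 0 := by
        linear_combination h - hI
      rcases mul_eq_zero.1 h2 with h3 | h3
      · left; linear_combination h3
      · right; linear_combination h3
    · rintro (rfl | rfl) <;> linear_combination hI
  · rw [Complex.norm_def, Complex.normSq_apply]
    simp [Real.sqrt_nonneg]
    rw [Real.mul_self_sqrt hpos.le]
  · rw [Complex.norm_def, Complex.normSq_apply]
    simp [Real.sqrt_nonneg]
    rw [Real.mul_self_sqrt hpos.le]
  · have h1 : Real.sqrt 1 < Real.sqrt (1 + τ * r * κ₁) :=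
      Real.sqrt_lt_sqrt (by norm_num) (by linarith)
    simpa using h1
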